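/- arXiv:1407.5915 — 3 statements merged into one kernel-verified Lean document; each statement's English description precedes it below -/
import Mathlib

section
/- (Exponential decay of fused-ANOVA weights on non-fused pairs.) Under the one-way ANOVA model with group proportions n_k/n → ρ_k ∈ (0,∞), for every pair (k,ℓ) with β*_k ≠ β*_ℓ and every δ with 0 < δ < α |β*_k − β*_ℓ|^γ, one has exp(δ√n) · w^{FA}_{kℓ} → 0 almost surely as n → ∞; in particular w^{FA}_{kℓ} / √n → 0 almost surely. -/
open MeasureTheory ProbabilityTheory Filter Finset
open scoped NNReal ENNReal

noncomputable section

/-- Number of observations among the first `n` that belong to group `k`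
(the group size `n_k`). -/
def groupSize {K : ℕ} (κ : ℕ → Fin K) (n : ℕ) (k : Fin K) : ℕ :=
  ((Finset.range n).filter fun i => κ i = k).card

/-- Empirical mean `ȳ_k` of group `k` among the first `n` observations. -/
def groupMean {Ω : Type*} {K : ℕ} (κ : ℕ → Fin K) (y : ℕ → Ω → ℝ)
    (n : ℕ) (k : Fin K) (ω : Ω) : ℝ :=
  (∑ i ∈ (Finset.range n).filter fun i => κ i = k, y i ω) / (groupSize κ n k : ℝ)

/-- The fused-ANOVA weight `w^FA_{kl} = n_k n_l exp(-α √n |ȳ_k - ȳ_l|^γ)`. -/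
def faWeight {Ω : Type*} {K : ℕ} (κ : ℕ → Fin K) (y : ℕ → Ω → ℝ) (α γ : ℝ)
    (n : ℕ) (k l : Fin K) (ω : Ω) : ℝ :=
  (groupSize κ n k : ℝ) * (groupSize κ n l : ℝ) *
    Real.exp (-(α * Real.sqrt (n : ℕ) * |groupMean κ y n k ω - groupMean κ y n l ω| ^ γ))


lemma sqrt_tendsto_atTop' : Tendsto Real.sqrt atTop atTop := by
  apply tendsto_atTop_atTop_of_monotone (fun x y h => Real.sqrt_le_sqrt h)
  intro b
  exact ⟨(max b 0) ^ 2, by rw [Real.sqrt_sq (le_max_right b 0)]; exact le_max_left b 0⟩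

lemma sq_mul_exp_neg_sqrt (a : ℝ) (ha : 0 < a) :
    Tendsto (fun n : ℕ => (n : ℝ)^2 * Real.exp (-(a * Real.sqrt n))) atTop (nhds 0) := by
  have h1 : Tendsto (fun n : ℕ => a * Real.sqrt n) atTop atTop :=
    (sqrt_tendsto_atTop'.comp tendsto_natCast_atTop_atTop).const_mul_atTop ha
  have h2 := (Real.tendsto_pow_mul_exp_neg_atTop_nhds_zero 4).comp h1
  have h3 := h2.const_mul (a⁻¹^4)
  rw [mul_zero] at h3
  refine h3.congr fun n => ?_
  simp only [Function.comp]
  have hs : Real.sqrt (n:ℝ) ^ 2 = (n:ℝ) := Real.sq_sqrt (Nat.cast_nonneg n)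
  have h4 : (a * Real.sqrt n)^4 = a^4 * (n:ℝ)^2 := by
    have h5 : (Real.sqrt (n:ℝ))^4 = ((Real.sqrt (n:ℝ))^2)^2 := by ring
    rw [mul_pow, h5, hs]
  rw [h4, ← mul_assoc]
  congr 1
  field_simp

lemma filter_range_eq_image_nth (p : ℕ → Prop) [DecidablePred p]
    (hp : (setOf p).Infinite) (n : ℕ) :
    (Finset.range n).filter p = (Finset.range (Nat.count p n)).image (Nat.nth p) := by
  ext i
  simp only [Finset.mem_filter, Finset.mem_range, Finset.mem_image]
  constructor
  · rintro ⟨hin, hpi⟩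
    exact ⟨Nat.count p i, Nat.count_strict_mono hpi hin, Nat.nth_count hpi⟩
  · rintro ⟨j, hj, rfl⟩
    exact ⟨(Nat.lt_nth_iff_count_lt hp).mp hj, Nat.nth_mem_of_infinite hp j⟩

lemma groupMean_tendsto_ae
    {Ω : Type*} [MeasureSpace Ω] [IsProbabilityMeasure (ℙ : Measure Ω)]
    {K : ℕ} (κ : ℕ → Fin K) (βstar : Fin K → ℝ) (ε : ℕ → Ω → ℝ)
    (hindep : iIndepFun ε ℙ)
    (hident : ∀ i, IdentDistrib (ε i) (ε 0) ℙ ℙ)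
    (hint : Integrable (ε 0) ℙ) (hmean : ∫ ω, ε 0 ω ∂ℙ = 0)
    (y : ℕ → Ω → ℝ) (hy : y = fun i ω => βstar (κ i) + ε i ω)
    (k : Fin K) (hp : (setOf fun i => κ i = k).Infinite) :
    ∀ᵐ ω ∂ℙ, Tendsto (fun n => groupMean κ y n k ω) atTop (nhds (βstar k)) := by
  set p : ℕ → Prop := fun i => κ i = k with hpdef
  set X : ℕ → Ω → ℝ := fun j => ε (Nat.nth p j) with hX
  have hintX : Integrable (X 0) ℙ := ((hident _).integrable_iff).mpr hint
  have hindepX : Pairwise (Function.onFun (IndepFun · · ℙ) X) := fun i j hij =>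
    hindep.indepFun ((Nat.nth_injective hp).ne hij)
  have hidentX : ∀ i, IdentDistrib (X i) (X 0) ℙ ℙ := fun i =>
    (hident _).trans (hident _).symm
  have hSLLN := strong_law_ae_real X hintX hindepX hidentX
  have hI : ∫ x, X 0 x ∂ℙ = 0 := ((hident (Nat.nth p 0)).integral_eq).trans hmean
  rw [hI] at hSLLN
  have hcount : Tendsto (fun n => Nat.count p n) atTop atTop :=
    tendsto_atTop_atTop_of_monotone (Nat.count_monotone p)
      fun b => ⟨Nat.nth p b, (Nat.count_nth_of_infinite hp b).ge⟩
  have hsize : ∀ n, groupSize κ n k = Nat.count p n := fun n =>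
    (Nat.count_eq_card_filter_range p n).symm
  filter_upwards [hSLLN] with ω hω
  have h2 : Tendsto (fun n => (∑ j ∈ range (Nat.count p n), X j ω) / (Nat.count p n : ℝ))
      atTop (nhds 0) := hω.comp hcount
  have heq : ∀ᶠ n in atTop, βstar k + (∑ j ∈ range (Nat.count p n), X j ω) / (Nat.count p n : ℝ)
      = groupMean κ y n k ω := by
    filter_upwards [hcount.eventually_ge_atTop 1] with n hn
    have hc : (0 : ℝ) < (Nat.count p n : ℝ) := by exact_mod_cast hn
    have hsum : ∑ i ∈ (Finset.range n).filter p, y i ω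
        = (Nat.count p n : ℝ) * βstar k + ∑ j ∈ range (Nat.count p n), X j ω := by
      have h1 : ∑ i ∈ (Finset.range n).filter p, y i ω
          = ∑ i ∈ (Finset.range n).filter p, (βstar k + ε i ω) := by
        refine Finset.sum_congr rfl fun i hi => ?_
        have : κ i = k := (Finset.mem_filter.mp hi).2
        simp [hy, this]
      have h2' : ∑ i ∈ (Finset.range n).filter p, ε i ω
          = ∑ j ∈ range (Nat.count p n), X j ω := by
        rw [filter_range_eq_image_nth p hp n,
          Finset.sum_image (fun a _ b _ h => Nat.nth_injective hp h)]
      rw [h1, Finset.sum_add_distrib, Finset.sum_const, h2',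
        ← Nat.count_eq_card_filter_range, nsmul_eq_mul]
    rw [groupMean, hsum, hsize]
    field_simp
  refine Tendsto.congr' heq ?_
  have h3 := Tendsto.const_add (βstar k) h2
  rwa [add_zero] at h3

/-- **Exponential decay of fused-ANOVA weights on non-fused pairs.**  For a pair
`(k, l)` with `β⋆_k ≠ β⋆_l` and any `0 < δ < α |β⋆_k - β⋆_l|^γ`, one has
`exp(δ√n) w^FA_{kl} → 0` almost surely; in particular `w^FA_{kl}/√n → 0` a.s. -/
theorem fusedANOVA_weight_decays_on_nonfused_pair
    {Ω : Type*} [MeasureSpace Ω] [IsProbabilityMeasure (ℙ : Measure Ω)]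
    {K : ℕ} (κ : ℕ → Fin K) (βstar : Fin K → ℝ) (ε : ℕ → Ω → ℝ)
    (hmeas : ∀ i, Measurable (ε i))
    (hindep : iIndepFun ε ℙ)
    (hident : ∀ i, IdentDistrib (ε i) (ε 0) ℙ ℙ)
    (hL2 : MemLp (ε 0) 2 ℙ) (hmean : ∫ ω, ε 0 ω ∂ℙ = 0)
    (σ : ℝ) (hσ : 0 < σ) (hvar : variance (ε 0) ℙ = σ ^ 2)
    (y : ℕ → Ω → ℝ) (hy : y = fun i ω => βstar (κ i) + ε i ω)
    (ρ : Fin K → ℝ) (hρ : ∀ k, 0 < ρ k)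
    (hprop : ∀ k, Tendsto (fun n => (groupSize κ n k : ℝ) / n) atTop (nhds (ρ k)))
    (α γ : ℝ) (hα : 0 < α) (hγ : 0 < γ)
    (k l : Fin K) (hkl : βstar k ≠ βstar l)
    (δ : ℝ) (hδ : 0 < δ) (hδ' : δ < α * |βstar k - βstar l| ^ γ) :
    (∀ᵐ ω ∂ℙ, Tendsto (fun n : ℕ => Real.exp (δ * Real.sqrt n) * faWeight κ y α γ n k l ω)
        atTop (nhds 0))
    ∧ (∀ᵐ ω ∂ℙ, Tendsto (fun n : ℕ => faWeight κ y α γ n k l ω / Real.sqrt n)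
        atTop (nhds 0)) := by
  have hD : 0 < |βstar k - βstar l| := abs_pos.mpr (sub_ne_zero.mpr hkl)
  have hεint : Integrable (ε 0) ℙ := hL2.integrable one_le_two
  have hinf : ∀ k' : Fin K, (setOf fun i => κ i = k').Infinite := by
    intro k'
    by_contra hfin
    rw [Set.not_infinite] at hfin
    have h0 : Tendsto (fun n : ℕ => (groupSize κ n k' : ℝ) / n) atTop (nhds 0) := by
      refine tendsto_of_tendsto_of_tendsto_of_le_of_le' tendsto_const_nhds
        (tendsto_const_div_atTop_nhds_zero_nat (hfin.toFinset.card : ℝ))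
        (Eventually.of_forall fun n => by positivity) ?_
      filter_upwards [eventually_ge_atTop 1] with n hn
      have hn0 : (0:ℝ) < n := by exact_mod_cast hn
      have hcard : groupSize κ n k' ≤ hfin.toFinset.card :=
        Finset.card_le_card fun x hx => hfin.mem_toFinset.mpr (Finset.mem_filter.mp hx).2
      gcongr
    exact (hρ k').ne' (tendsto_nhds_unique (hprop k') h0)
  have hk' := groupMean_tendsto_ae κ βstar ε hindep hident hεint hmean y hy k (hinf k)
  have hl' := groupMean_tendsto_ae κ βstar ε hindep hident hεint hmean y hy l (hinf l)
  have main : ∀ᵐ ω ∂ℙ, Tendsto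
      (fun n : ℕ => Real.exp (δ * Real.sqrt n) * faWeight κ y α γ n k l ω) atTop (nhds 0) := by
    filter_upwards [hk', hl'] with ω hgk hgl
    have hT : Tendsto (fun n => |groupMean κ y n k ω - groupMean κ y n l ω| ^ γ) atTop
        (nhds (|βstar k - βstar l| ^ γ)) :=
      Filter.Tendsto.rpow ((hgk.sub hgl).abs) tendsto_const_nhds (Or.inl hD.ne')
    set c : ℝ := (δ + α * |βstar k - βstar l| ^ γ) / 2 with hc
    have hδc : δ < c := by rw [hc]; linarith
    have hcα : c < α * |βstar k - βstar l| ^ γ := by rw [hc]; linarith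
    have hev : ∀ᶠ n in atTop, c ≤ α * |groupMean κ y n k ω - groupMean κ y n l ω| ^ γ :=
      (hT.const_mul α).eventually (eventually_ge_nhds hcα)
    refine tendsto_of_tendsto_of_tendsto_of_le_of_le' tendsto_const_nhds
      (sq_mul_exp_neg_sqrt (c - δ) (by linarith)) ?_ ?_
    · refine Eventually.of_forall fun n => ?_
      simp only [faWeight]
      positivity
    · filter_upwards [hev] with n hn
      simp only [faWeight]
      set t := |groupMean κ y n k ω - groupMean κ y n l ω| ^ γ with ht
      set s := Real.sqrt n with hs
      have hs0 : (0:ℝ) ≤ s := Real.sqrt_nonneg _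
      have hnk : (groupSize κ n k : ℝ) ≤ n := by
        exact_mod_cast (Finset.card_filter_le (Finset.range n) _).trans (Finset.card_range n).le
      have hnl : (groupSize κ n l : ℝ) ≤ n := by
        exact_mod_cast (Finset.card_filter_le (Finset.range n) _).trans (Finset.card_range n).le
      have hexp : Real.exp (δ * s) * Real.exp (-(α * s * t)) ≤ Real.exp (-((c - δ) * s)) := by
        rw [← Real.exp_add, Real.exp_le_exp]
        nlinarith [mul_le_mul_of_nonneg_right hn hs0]
      calc Real.exp (δ * s) *
            ((groupSize κ n k : ℝ) * (groupSize κ n l : ℝ) * Real.exp (-(α * s * t)))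
          = (groupSize κ n k : ℝ) * (groupSize κ n l : ℝ) *
            (Real.exp (δ * s) * Real.exp (-(α * s * t))) := by ring
        _ ≤ (n:ℝ) * (n:ℝ) * Real.exp (-((c - δ) * s)) := by
            exact mul_le_mul (mul_le_mul hnk hnl (Nat.cast_nonneg _) (Nat.cast_nonneg _)) hexp
              (by positivity) (by positivity)
        _ = (n:ℝ)^2 * Real.exp (-((c - δ) * s)) := by ring
  refine ⟨main, ?_⟩
  filter_upwards [main] with ω h1
  refine tendsto_of_tendsto_of_tendsto_of_le_of_le' tendsto_const_nhds h1 ?_ ?_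
  · refine Eventually.of_forall fun n => ?_
    have hw : 0 ≤ faWeight κ y α γ n k l ω := by simp only [faWeight]; positivity
    positivity
  · filter_upwards [eventually_ge_atTop 1] with n hn
    have hw : 0 ≤ faWeight κ y α γ n k l ω := by simp only [faWeight]; positivity
    have hs1 : (1:ℝ) ≤ Real.sqrt n := by
      rw [show (1:ℝ) = Real.sqrt 1 from (Real.sqrt_one).symm]
      exact Real.sqrt_le_sqrt (by exact_mod_cast hn)
    calc faWeight κ y α γ n k l ω / Real.sqrt n ≤ faWeight κ y α γ n k l ω :=
          div_le_self hw hs1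
      _ ≤ Real.exp (δ * Real.sqrt n) * faWeight κ y α γ n k l ω :=
          le_mul_of_one_le_left hw (Real.one_le_exp (by positivity))
end
end

section
/- (Vanishing scaled penalty on non-fused pairs.) Under the one-way ANOVA model with group proportions n_k/n → ρ_k ∈ (0,∞), for every pair (k,ℓ) with β*_k ≠ β*_ℓ and every sequence λ_n > 0 satisfying λ_n n^{3/2} exp(−α √n |β*_k − β*_ℓ|^γ / 2) → 0, the scaled penalty weight λ_n w^{FA}_{kℓ} / √n converges to 0 in probability as n → ∞. -/
open MeasureTheory ProbabilityTheory Filter Finset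
open scoped NNReal ENNReal

noncomputable section

/-- **Vanishing scaled penalty on non-fused pairs.**  For a pair `(k, l)` with
`β⋆_k ≠ β⋆_l` and `λ_n > 0` with `λ_n n^{3/2} exp(-α √n |β⋆_k - β⋆_l|^γ / 2) → 0`,
the scaled penalty weight `λ_n w^FA_{kl} / √n` tends to `0` in probability. -/
theorem fusedANOVA_scaled_penalty_vanishes_on_nonfused_pair
    {Ω : Type*} [MeasureSpace Ω] [IsProbabilityMeasure (ℙ : Measure Ω)]
    {K : ℕ} (κ : ℕ → Fin K) (βstar : Fin K → ℝ) (ε : ℕ → Ω → ℝ)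
    (hmeas : ∀ i, Measurable (ε i))
    (hindep : iIndepFun ε ℙ)
    (hident : ∀ i, IdentDistrib (ε i) (ε 0) ℙ ℙ)
    (hL2 : MemLp (ε 0) 2 ℙ) (hmean : ∫ ω, ε 0 ω ∂ℙ = 0)
    (σ : ℝ) (hσ : 0 < σ) (hvar : variance (ε 0) ℙ = σ ^ 2)
    (y : ℕ → Ω → ℝ) (hy : y = fun i ω => βstar (κ i) + ε i ω)
    (ρ : Fin K → ℝ) (hρ : ∀ k, 0 < ρ k)
    (hprop : ∀ k, Tendsto (fun n => (groupSize κ n k : ℝ) / n) atTop (nhds (ρ k)))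
    (α γ : ℝ) (hα : 0 < α) (hγ : 0 < γ)
    (lam : ℕ → ℝ) (hlam : ∀ n, 0 < lam n)
    (k l : Fin K) (hkl : βstar k ≠ βstar l)
    (hlam0 : Tendsto (fun n => lam n * (n : ℝ) ^ ((3 : ℝ) / 2) *
        Real.exp (-(α * Real.sqrt n * |βstar k - βstar l| ^ γ) / 2)) atTop (nhds 0)) :
    TendstoInMeasure ℙ (fun n : ℕ => fun ω => lam n * faWeight κ y α γ n k l ω / Real.sqrt n)
      atTop (fun _ => (0 : ℝ)) := by
  -- group sizes tend to infinity
  have hsize : ∀ k0 : Fin K, Tendsto (fun n => (groupSize κ n k0 : ℝ)) atTop atTop := by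
    intro k0
    have h1 : Tendsto (fun n : ℕ => ((groupSize κ n k0 : ℝ) / n) * n) atTop atTop :=
      Tendsto.pos_mul_atTop (hρ k0) (hprop k0) tendsto_natCast_atTop_atTop
    refine h1.congr' ?_
    filter_upwards [eventually_ge_atTop 1] with n hn
    have hn0 : (n : ℝ) ≠ 0 := by positivity
    field_simp
  -- key: group means converge in probability
  have key : ∀ (k0 : Fin K) (δ : ℝ), 0 < δ →
      Tendsto (fun n => ℙ {ω | δ ≤ |groupMean κ y n k0 ω - βstar k0|}) atTop (nhds 0) := by
    intro k0 δ hδ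
    have hbound : ∀ᶠ n in atTop,
        ℙ {ω | δ ≤ |groupMean κ y n k0 ω - βstar k0|} ≤
          ENNReal.ofReal (σ ^ 2 / (δ ^ 2 * (groupSize κ n k0 : ℝ))) := by
      filter_upwards [(hsize k0).eventually_ge_atTop 1] with n hm1
      set F : Finset ℕ := (Finset.range n).filter fun i => κ i = k0 with hF
      set m : ℝ := (groupSize κ n k0 : ℝ) with hmdef
      have hm0 : (0:ℝ) < m := lt_of_lt_of_le one_pos hm1
      have hMem : ∀ i ∈ F, MemLp (ε i) 2 ℙ := fun i _ => (hident i).symm.memLp_snd hL2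
      have hSmem : MemLp (∑ i ∈ F, ε i) 2 ℙ := memLp_finset_sum' _ hMem
      have hEi : ∀ i, ∫ ω, ε i ω ∂ℙ = 0 := fun i => (hident i).integral_eq.trans hmean
      have hES : ∫ ω, (∑ i ∈ F, ε i) ω ∂ℙ = 0 := by
        have : ∫ ω, (∑ i ∈ F, ε i) ω ∂ℙ = ∑ i ∈ F, ∫ ω, ε i ω ∂ℙ := by
          simp only [Finset.sum_apply]
          exact integral_finset_sum _ fun i _ => (hMem i ‹i ∈ F›).integrable one_le_two
        rw [this]
        exact Finset.sum_eq_zero fun i _ => hEi i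
      have hVS : variance (∑ i ∈ F, ε i) ℙ = m * σ ^ 2 := by
        rw [IndepFun.variance_sum hMem
          (fun i _ j _ hij => hindep.indepFun hij)]
        have : ∀ i ∈ F, variance (ε i) ℙ = σ ^ 2 := fun i _ => (hident i).variance_eq.trans hvar
        rw [Finset.sum_congr rfl this, Finset.sum_const, nsmul_eq_mul]
        rfl
      have hcpos : 0 < δ * m := by positivity
      have hcheb := meas_ge_le_variance_div_sq (μ := ℙ) hSmem hcpos
      have hsub : {ω | δ ≤ |groupMean κ y n k0 ω - βstar k0|} ⊆
          {ω | δ * m ≤ |(∑ i ∈ F, ε i) ω - ∫ ω, (∑ i ∈ F, ε i) ω ∂ℙ|} := by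
        intro ω hω
        simp only [Set.mem_setOf_eq] at hω ⊢
        rw [hES, sub_zero, Finset.sum_apply]
        have hgm : groupMean κ y n k0 ω - βstar k0 = (∑ i ∈ F, ε i ω) / m := by
          have hsum : ∑ i ∈ F, y i ω = m * βstar k0 + ∑ i ∈ F, ε i ω := by
            rw [hy]
            have : ∀ i ∈ F, βstar (κ i) + ε i ω = βstar k0 + ε i ω := by
              intro i hi
              simp only [hF, Finset.mem_filter] at hi
              rw [hi.2]
            rw [Finset.sum_congr rfl this, Finset.sum_add_distrib, Finset.sum_const,
              nsmul_eq_mul]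
            rfl
          rw [groupMean, hsum, ← hmdef]
          field_simp
          ring
        rw [hgm, abs_div, abs_of_pos hm0] at hω
        calc δ * m ≤ (|∑ i ∈ F, ε i ω| / m) * m := by
              exact mul_le_mul_of_nonneg_right hω hm0.le
          _ = |∑ i ∈ F, ε i ω| := by field_simp
      calc ℙ {ω | δ ≤ |groupMean κ y n k0 ω - βstar k0|}
          ≤ ℙ {ω | δ * m ≤ |(∑ i ∈ F, ε i) ω - ∫ ω, (∑ i ∈ F, ε i) ω ∂ℙ|} :=
            measure_mono hsub
        _ ≤ ENNReal.ofReal (variance (∑ i ∈ F, ε i) ℙ / (δ * m) ^ 2) := hcheb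
        _ = ENNReal.ofReal (σ ^ 2 / (δ ^ 2 * m)) := by
            congr 1
            rw [hVS]
            field_simp
    have hto0 : Tendsto (fun n => ENNReal.ofReal (σ ^ 2 / (δ ^ 2 * (groupSize κ n k0 : ℝ))))
        atTop (nhds 0) := by
      have h1 : Tendsto (fun n => σ ^ 2 / (δ ^ 2 * (groupSize κ n k0 : ℝ))) atTop (nhds 0) :=
        tendsto_const_nhds.div_atTop ((hsize k0).const_mul_atTop (by positivity))
      simpa using ENNReal.tendsto_ofReal h1
    exact tendsto_of_tendsto_of_tendsto_of_le_of_le' tendsto_const_nhds hto0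
      (Eventually.of_forall fun n => zero_le) hbound
  -- main argument
  rw [tendstoInMeasure_iff_dist]
  intro ε' hε'
  set d : ℝ := |βstar k - βstar l| with hd
  have hdpos : 0 < d := abs_pos.mpr (sub_ne_zero.mpr hkl)
  set r : ℝ := (2:ℝ) ^ (-(1/γ)) with hr
  have hrpos : 0 < r := Real.rpow_pos_of_pos two_pos _
  have hrlt1 : r < 1 := Real.rpow_lt_one_of_one_lt_of_neg one_lt_two (neg_lt_zero.mpr (by positivity))
  set δ0 : ℝ := (1 - r) / 2 * d with hδ0
  have hδ0pos : 0 < δ0 := by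
    have : 0 < 1 - r := by linarith
    positivity
  have hrγ : r ^ γ = 1 / 2 := by
    rw [hr, ← Real.rpow_mul (by norm_num : (0:ℝ) ≤ 2)]
    have : -(1/γ) * γ = -1 := by field_simp
    rw [this, Real.rpow_neg_one]
    norm_num
  have hBk := key k δ0 hδ0pos
  have hBl := key l δ0 hδ0pos
  have hsub : ∀ᶠ n in atTop,
      {ω | ε' ≤ dist ((fun ω => lam n * faWeight κ y α γ n k l ω / Real.sqrt n) ω) 0} ⊆
        {ω | δ0 ≤ |groupMean κ y n k ω - βstar k|} ∪
        {ω | δ0 ≤ |groupMean κ y n l ω - βstar l|} := by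
    filter_upwards [eventually_ge_atTop 1, hlam0.eventually (gt_mem_nhds hε')] with n hn1 hane
    intro ω hω
    by_contra hcon
    simp only [Set.mem_union, Set.mem_setOf_eq, not_or, not_le] at hcon
    obtain ⟨hk1, hl1⟩ := hcon
    simp only [Set.mem_setOf_eq, Real.dist_0_eq_abs] at hω
    set yk := groupMean κ y n k ω
    set yl := groupMean κ y n l ω
    have htri : d ≤ |yk - yl| + |yk - βstar k| + |yl - βstar l| := by
      have h1 : βstar k - βstar l = (yk - yl) - (yk - βstar k) + (yl - βstar l) := by ring
      calc d = |(yk - yl) - (yk - βstar k) + (yl - βstar l)| := by rw [hd, h1]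
        _ ≤ |(yk - yl) - (yk - βstar k)| + |yl - βstar l| := abs_add_le _ _
        _ ≤ |yk - yl| + |yk - βstar k| + |yl - βstar l| := by
            have := abs_sub (yk - yl) (yk - βstar k)
            linarith
    have h1 : r * d ≤ |yk - yl| := by
      have : d - 2 * δ0 = r * d := by rw [hδ0]; ring
      linarith
    have hrd : (0:ℝ) ≤ r * d := by positivity
    have h2 : d ^ γ / 2 ≤ |yk - yl| ^ γ := by
      have := Real.rpow_le_rpow hrd h1 hγ.le
      rw [Real.mul_rpow hrpos.le hdpos.le, hrγ] at this
      linarith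
    have hsq : (0:ℝ) ≤ Real.sqrt n := Real.sqrt_nonneg _
    have h3 : Real.exp (-(α * Real.sqrt n * |yk - yl| ^ γ)) ≤
        Real.exp (-(α * Real.sqrt n * d ^ γ) / 2) := by
      rw [Real.exp_le_exp]
      nlinarith [mul_le_mul_of_nonneg_left h2 (mul_nonneg hα.le hsq)]
    have hnk : (groupSize κ n k : ℝ) ≤ n := by
      exact_mod_cast Finset.card_filter_le _ _ |>.trans (by simp)
    have hnl : (groupSize κ n l : ℝ) ≤ n := by
      exact_mod_cast Finset.card_filter_le _ _ |>.trans (by simp)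
    have h4 : faWeight κ y α γ n k l ω ≤
        (n:ℝ) ^ 2 * Real.exp (-(α * Real.sqrt n * d ^ γ) / 2) := by
      rw [faWeight]
      have hexp : (0:ℝ) < Real.exp (-(α * Real.sqrt n * |yk - yl| ^ γ)) := Real.exp_pos _
      calc (groupSize κ n k : ℝ) * (groupSize κ n l : ℝ) *
            Real.exp (-(α * Real.sqrt n * |yk - yl| ^ γ))
          ≤ (n:ℝ) * (n:ℝ) * Real.exp (-(α * Real.sqrt n * d ^ γ) / 2) :=
            mul_le_mul (mul_le_mul hnk hnl (Nat.cast_nonneg _) (Nat.cast_nonneg _)) h3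
              hexp.le (by positivity)
        _ = (n:ℝ) ^ 2 * Real.exp (-(α * Real.sqrt n * d ^ γ) / 2) := by ring
    have hnpos : (0:ℝ) < n := by exact_mod_cast Nat.lt_of_lt_of_le Nat.zero_lt_one hn1
    have hsqpos : (0:ℝ) < Real.sqrt n := Real.sqrt_pos.mpr hnpos
    have hpow : (n:ℝ) ^ ((3:ℝ)/2) = (n:ℝ) ^ 2 / Real.sqrt n := by
      rw [Real.sqrt_eq_rpow, ← Real.rpow_natCast (n:ℝ) 2, ← Real.rpow_sub hnpos]
      norm_num
    have h5 : lam n * faWeight κ y α γ n k l ω / Real.sqrt n ≤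
        lam n * (n:ℝ) ^ ((3:ℝ)/2) * Real.exp (-(α * Real.sqrt n * d ^ γ) / 2) := by
      rw [hpow]
      have h6 : lam n * faWeight κ y α γ n k l ω ≤
          lam n * ((n:ℝ) ^ 2 * Real.exp (-(α * Real.sqrt n * d ^ γ) / 2)) :=
        mul_le_mul_of_nonneg_left h4 (hlam n).le
      calc lam n * faWeight κ y α γ n k l ω / Real.sqrt n
          ≤ lam n * ((n:ℝ) ^ 2 * Real.exp (-(α * Real.sqrt n * d ^ γ) / 2)) / Real.sqrt n := by
            gcongr
        _ = lam n * ((n:ℝ) ^ 2 / Real.sqrt n) * Real.exp (-(α * Real.sqrt n * d ^ γ) / 2) := by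
            field_simp
    have hXnn : 0 ≤ lam n * faWeight κ y α γ n k l ω / Real.sqrt n := by
      have hw : 0 ≤ faWeight κ y α γ n k l ω := by
        rw [faWeight]; positivity
      exact div_nonneg (mul_nonneg (hlam n).le hw) hsq
    rw [abs_of_nonneg hXnn] at hω
    linarith
  refine tendsto_of_tendsto_of_tendsto_of_le_of_le' tendsto_const_nhds
    (by simpa using hBk.add hBl) (Eventually.of_forall fun n => zero_le) ?_
  filter_upwards [hsub] with n hn
  exact (measure_mono hn).trans (measure_union_le _ _)
end
end

section
/- (Pointwise limit of the localized penalty term.) Under the one-way ANOVA model with group proportions n_k/n → ρ_k ∈ (0,∞), fix u ∈ ℝ^K and a pair (k,ℓ) with β*_k ≠ β*_ℓ, and let λ_n > 0 satisfy λ_n n^{3/2} exp(−α √n |β*_k − β*_ℓ|^γ / 2) → 0. Then the localized penalty increment λ_n w^{FA}_{kℓ} ( |β*_k − β*_ℓ + (u_k − u_ℓ)/√n| − |β*_k − β*_ℓ| ) converges to 0 in probability as n → ∞. -/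
open MeasureTheory ProbabilityTheory Filter Finset
open scoped NNReal ENNReal

noncomputable section

lemma chebyshev_groupMean
    {Ω : Type*} [MeasureSpace Ω] [IsProbabilityMeasure (ℙ : Measure Ω)]
    {K : ℕ} (κ : ℕ → Fin K) (βstar : Fin K → ℝ) (ε : ℕ → Ω → ℝ)
    (hindep : iIndepFun ε ℙ)
    (hident : ∀ i, IdentDistrib (ε i) (ε 0) ℙ ℙ)
    (hL2 : MemLp (ε 0) 2 ℙ) (hmean : ∫ ω, ε 0 ω ∂ℙ = 0)
    (σ : ℝ) (hvar : variance (ε 0) ℙ = σ ^ 2)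
    (y : ℕ → Ω → ℝ) (hy : y = fun i ω => βstar (κ i) + ε i ω)
    (k : Fin K) (δ : ℝ) (hδ : 0 < δ)
    (hnk : Tendsto (fun n => groupSize κ n k) atTop atTop) :
    Tendsto (fun n => ℙ {ω | δ ≤ |groupMean κ y n k ω - βstar k|}) atTop (nhds 0) := by
  set F : ℕ → Finset ℕ := fun n => (Finset.range n).filter fun i => κ i = k with hF
  have hεL2 : ∀ i, MemLp (ε i) 2 ℙ := fun i => (hident i).symm.memLp_snd hL2
  set S : ℕ → Ω → ℝ := fun n ω => ∑ i ∈ F n, ε i ω with hSdef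
  have hS2 : ∀ n, MemLp (S n) 2 ℙ := by
    intro n
    have := memLp_finset_sum' (μ := ℙ) (F n) (f := ε) (fun i _ => hεL2 i)
    convert this using 1
    funext ω
    simp [hSdef]
  have hSmean : ∀ n, ∫ ω, S n ω ∂ℙ = 0 := by
    intro n
    rw [integral_finset_sum _ (fun i _ => (hεL2 i).integrable one_le_two)]
    simp only [(fun i => (hident i).integral_eq) , hmean, Finset.sum_const_zero]
  have hSvar : ∀ n, variance (S n) ℙ = (groupSize κ n k : ℝ) * σ ^ 2 := by
    intro n
    have := IndepFun.variance_sum (μ := ℙ) (X := ε) (s := F n)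
      (fun i _ => hεL2 i) (fun i _ j _ hij => hindep.indepFun hij)
    rw [show (∑ i ∈ F n, ε i : Ω → ℝ) = S n by funext ω; simp [hSdef]] at this
    rw [this]
    simp only [(fun i => (hident i).variance_eq), hvar, Finset.sum_const, nsmul_eq_mul]
    rfl
  -- eventual bound
  have hbound : ∀ᶠ n in atTop, ℙ {ω | δ ≤ |groupMean κ y n k ω - βstar k|}
      ≤ ENNReal.ofReal (σ ^ 2 / δ ^ 2 / (groupSize κ n k : ℝ)) := by
    filter_upwards [hnk.eventually_ge_atTop 1] with n hn1
    have hnkpos : (0 : ℝ) < (groupSize κ n k : ℝ) := by exact_mod_cast hn1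
    have hseteq : {ω | δ ≤ |groupMean κ y n k ω - βstar k|}
        = {ω | (groupSize κ n k : ℝ) * δ ≤ |S n ω - ∫ ω, S n ω ∂ℙ|} := by
      ext ω
      have hsum : ∑ i ∈ F n, y i ω = (groupSize κ n k : ℝ) * βstar k + S n ω := by
        rw [hy]
        simp only []
        rw [Finset.sum_add_distrib]
        congr 1
        rw [Finset.sum_congr rfl (fun i hi => by
          rw [(Finset.mem_filter.1 hi).2]), Finset.sum_const, groupSize, nsmul_eq_mul]
      have hmeaneq : groupMean κ y n k ω - βstar k = S n ω / (groupSize κ n k : ℝ) := by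
        rw [groupMean]
        rw [show (∑ i ∈ (Finset.range n).filter fun i => κ i = k, y i ω) = ∑ i ∈ F n, y i ω from rfl, hsum]
        field_simp
        ring
      simp only [Set.mem_setOf_eq, hmeaneq, hSmean n, sub_zero, abs_div,
        abs_of_pos hnkpos, le_div_iff₀ hnkpos]
      constructor <;> intro h <;> linarith
    rw [hseteq]
    have := meas_ge_le_variance_div_sq (μ := ℙ) (hS2 n)
      (mul_pos hnkpos hδ)
    refine this.trans (le_of_eq ?_)
    congr 1
    rw [hSvar n]
    field_simp
  -- the bound tends to 0
  have hto0 : Tendsto (fun n => ENNReal.ofReal (σ ^ 2 / δ ^ 2 / (groupSize κ n k : ℝ)))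
      atTop (nhds 0) := by
    have h1 : Tendsto (fun n => σ ^ 2 / δ ^ 2 / (groupSize κ n k : ℝ)) atTop (nhds 0) := by
      apply Tendsto.div_atTop (tendsto_const_nhds)
      exact tendsto_natCast_atTop_atTop.comp hnk
    have := ENNReal.tendsto_ofReal h1
    simpa using this
  exact tendsto_of_tendsto_of_tendsto_of_le_of_le' tendsto_const_nhds hto0
    (Eventually.of_forall fun n => zero_le) hbound

/-- **Pointwise limit of the localized penalty term.**  For `u ∈ ℝ^K` and a pair
`(k, l)` with `β⋆_k ≠ β⋆_l`, if `λ_n n^{3/2} exp(-α √n |β⋆_k - β⋆_l|^γ / 2) → 0`, then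
`λ_n w^FA_{kl} (|β⋆_k - β⋆_l + (u_k - u_l)/√n| - |β⋆_k - β⋆_l|) → 0` in probability. -/
theorem fusedANOVA_localized_penalty_vanishes_on_nonfused_pair
    {Ω : Type*} [MeasureSpace Ω] [IsProbabilityMeasure (ℙ : Measure Ω)]
    {K : ℕ} (κ : ℕ → Fin K) (βstar : Fin K → ℝ) (ε : ℕ → Ω → ℝ)
    (hmeas : ∀ i, Measurable (ε i))
    (hindep : iIndepFun ε ℙ)
    (hident : ∀ i, IdentDistrib (ε i) (ε 0) ℙ ℙ)
    (hL2 : MemLp (ε 0) 2 ℙ) (hmean : ∫ ω, ε 0 ω ∂ℙ = 0)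
    (σ : ℝ) (hσ : 0 < σ) (hvar : variance (ε 0) ℙ = σ ^ 2)
    (y : ℕ → Ω → ℝ) (hy : y = fun i ω => βstar (κ i) + ε i ω)
    (ρ : Fin K → ℝ) (hρ : ∀ k, 0 < ρ k)
    (hprop : ∀ k, Tendsto (fun n => (groupSize κ n k : ℝ) / n) atTop (nhds (ρ k)))
    (α γ : ℝ) (hα : 0 < α) (hγ : 0 < γ)
    (lam : ℕ → ℝ) (hlam : ∀ n, 0 < lam n)
    (u : Fin K → ℝ) (k l : Fin K) (hkl : βstar k ≠ βstar l)
    (hlam0 : Tendsto (fun n => lam n * (n : ℝ) ^ ((3 : ℝ) / 2) *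
        Real.exp (-(α * Real.sqrt n * |βstar k - βstar l| ^ γ) / 2)) atTop (nhds 0)) :
    TendstoInMeasure ℙ
      (fun n : ℕ => fun ω => lam n * faWeight κ y α γ n k l ω *
        (|βstar k - βstar l + (u k - u l) / Real.sqrt n| - |βstar k - βstar l|))
      atTop (fun _ => (0 : ℝ)) := by
  rw [tendstoInMeasure_iff_dist]
  intro δ hδ
  have hΔ : (0:ℝ) < |βstar k - βstar l| := abs_pos.2 (sub_ne_zero.2 hkl)
  set D := |βstar k - βstar l| with hD
  set c : ℝ := D * (2:ℝ) ^ (-(1/γ)) with hc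
  have hcpos : 0 < c := mul_pos hΔ (Real.rpow_pos_of_pos two_pos _)
  have hclt : c < D := by
    have h1 : (2:ℝ) ^ (-(1/γ)) < 1 :=
      Real.rpow_lt_one_of_one_lt_of_neg one_lt_two (neg_lt_zero.2 (by positivity))
    calc c < D * 1 := by rw [hc]; exact mul_lt_mul_of_pos_left h1 hΔ
      _ = D := mul_one D
  set η := D - c with hη
  have hηpos : 0 < η := sub_pos.2 hclt
  -- group sizes tend to infinity
  have hnk : ∀ m : Fin K, Tendsto (fun n => groupSize κ n m) atTop atTop := by
    intro m
    rw [← tendsto_natCast_atTop_iff (R := ℝ)]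
    have hev : ∀ᶠ n : ℕ in atTop, (ρ m / 2) * n ≤ (groupSize κ n m : ℝ) := by
      filter_upwards [(hprop m).eventually (eventually_ge_nhds (show ρ m / 2 < ρ m by
        linarith [hρ m])), eventually_gt_atTop 0] with n hn hn0
      have hn0' : (0:ℝ) < n := by exact_mod_cast hn0
      rw [le_div_iff₀ hn0'] at hn
      linarith
    exact tendsto_atTop_mono' _ hev
      ((tendsto_natCast_atTop_atTop (R := ℝ)).const_mul_atTop (by linarith [hρ m]))
  have hk := chebyshev_groupMean κ βstar ε hindep hident hL2 hmean σ hvar y hy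
    k (η/2) (half_pos hηpos) (hnk k)
  have hl := chebyshev_groupMean κ βstar ε hindep hident hL2 hmean σ hvar y hy
    l (η/2) (half_pos hηpos) (hnk l)
  -- the deterministic bound tends to 0
  set C : ℕ → ℝ := fun n => lam n * (n : ℝ) ^ ((3 : ℝ) / 2) *
    Real.exp (-(α * Real.sqrt n * D ^ γ) / 2) * |u k - u l| with hCdef
  have hCn : Tendsto C atTop (nhds 0) := by
    have := hlam0.mul_const |u k - u l|
    simpa using this
  have hev : ∀ᶠ n in atTop, C n < δ := hCn.eventually (gt_mem_nhds hδ)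
  -- squeeze
  refine tendsto_of_tendsto_of_tendsto_of_le_of_le' tendsto_const_nhds
    (by simpa using hk.add hl) (Eventually.of_forall fun n => zero_le) ?_
  filter_upwards [hev, eventually_ge_atTop 1] with n hevn hn1
  refine le_trans (measure_mono ?_) (measure_union_le _ _)
  intro ω hω
  simp only [Set.mem_setOf_eq, Real.dist_eq, sub_zero] at hω
  by_contra hcon
  simp only [Set.mem_union, Set.mem_setOf_eq, not_or, not_le] at hcon
  obtain ⟨hA, hB⟩ := hcon
  set Mk := groupMean κ y n k ω with hMk
  set Ml := groupMean κ y n l ω with hMl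
  have h1 : |Mk - Ml - (βstar k - βstar l)| < η := by
    calc |Mk - Ml - (βstar k - βstar l)| = |(Mk - βstar k) - (Ml - βstar l)| := by ring_nf
      _ ≤ |Mk - βstar k| + |Ml - βstar l| := abs_sub _ _
      _ < η := by linarith
  have h2 : c ≤ |Mk - Ml| := by
    have := abs_sub_abs_le_abs_sub (βstar k - βstar l) (Mk - Ml)
    rw [abs_sub_comm (βstar k - βstar l) (Mk - Ml)] at this
    linarith
  have hcγ : c ^ γ = D ^ γ / 2 := by
    rw [hc, Real.mul_rpow hΔ.le (by positivity),
      ← Real.rpow_mul (by norm_num : (0:ℝ) ≤ 2),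
      show (-(1/γ)) * γ = -1 by field_simp, Real.rpow_neg_one]
    ring
  have h3 : D ^ γ / 2 ≤ |Mk - Ml| ^ γ := by
    rw [← hcγ]
    exact Real.rpow_le_rpow hcpos.le h2 hγ.le
  have hE : Real.exp (-(α * Real.sqrt n * |Mk - Ml| ^ γ))
      ≤ Real.exp (-(α * Real.sqrt n * D ^ γ) / 2) := by
    apply Real.exp_le_exp.2
    have hsn : (0:ℝ) ≤ α * Real.sqrt n := by positivity
    nlinarith [mul_le_mul_of_nonneg_left h3 hsn]
  have h5 : |(|βstar k - βstar l + (u k - u l) / Real.sqrt n| - D)|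
      ≤ |u k - u l| / Real.sqrt n := by
    have := abs_abs_sub_abs_le_abs_sub (βstar k - βstar l + (u k - u l) / Real.sqrt n)
      (βstar k - βstar l)
    simpa [abs_div, abs_of_nonneg (Real.sqrt_nonneg (n:ℝ))] using this
  have hnle : ∀ m : Fin K, (groupSize κ n m : ℝ) ≤ n := by
    intro m
    exact_mod_cast (Finset.card_filter_le _ _).trans (Finset.card_range n).le
  have hnleN : ∀ m : Fin K, groupSize κ n m ≤ n :=
    fun m => (Finset.card_filter_le _ _).trans_eq (Finset.card_range n)
  have hsqpos : (0:ℝ) < Real.sqrt n := Real.sqrt_pos.2 (by exact_mod_cast hn1)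
  have hkey : |lam n * faWeight κ y α γ n k l ω *
      (|βstar k - βstar l + (u k - u l) / Real.sqrt n| - D)| ≤ C n := by
    rw [abs_mul, abs_mul, abs_of_pos (hlam n), faWeight,
      abs_of_nonneg (by positivity :
        (0:ℝ) ≤ (groupSize κ n k : ℝ) * (groupSize κ n l : ℝ) *
          Real.exp (-(α * Real.sqrt (n : ℕ) * |groupMean κ y n k ω - groupMean κ y n l ω| ^ γ)))]
    calc lam n * ((groupSize κ n k : ℝ) * (groupSize κ n l : ℝ) *
          Real.exp (-(α * Real.sqrt (n : ℕ) * |Mk - Ml| ^ γ))) *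
          |(|βstar k - βstar l + (u k - u l) / Real.sqrt n| - D)|
        ≤ lam n * ((n : ℝ) * (n : ℝ) * Real.exp (-(α * Real.sqrt n * D ^ γ) / 2)) *
          (|u k - u l| / Real.sqrt n) := by
          gcongr
          all_goals first
            | exact (hlam n).le
            | exact mul_nonneg (hlam n).le (by positivity)
            | exact hE
            | exact h5
            | exact hnleN _
            | exact_mod_cast hnle _
            | positivity
      _ = C n := by
          have h32 : (n:ℝ) ^ ((3:ℝ)/2) * Real.sqrt n = (n : ℝ) * (n : ℝ) := by
            rw [Real.sqrt_eq_rpow, ← Real.rpow_add (by positivity : (0:ℝ) < n),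
              show (3:ℝ)/2 + 1/2 = 2 by norm_num]
            rw [show ((2:ℝ) : ℝ) = ((2:ℕ) : ℝ) by norm_num, Real.rpow_natCast]
            ring
          rw [hCdef]
          rw [← h32]
          field_simp
  exact absurd (lt_of_le_of_lt hkey hevn) (not_lt.2 hω)
end
end
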